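/- Let G be a finite p-solvable group with abelian Sylow p-subgroups. Then G = O_{p'pp'}(G), i.e., the p'-series of G reaches G in three steps: G/O_{p'p}(G) is a p'-group, where O_{p'p}(G)/O_{p'}(G) is the largest normal p-subgroup of G/O_{p'}(G). -/

import Mathlib

open scoped TensorProduct Classical

namespace ProjIM

variable {G : Type*} [Group G]

/-- The multiplicative 2-cocycle condition for `α : G → G → ℂˣ`. -/
def IsMulCocycle (α : G → G → ℂˣ) : Prop :=
  ∀ x y z, α x y * α (x * y) z = α y z * α x (y * z)

/-- The group of `ℂˣ`-valued 2-cocycles of `G` (trivial action). -/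
def CocycleGroup (G : Type*) [Group G] : Subgroup (G → G → ℂˣ) where
  carrier := {α | IsMulCocycle α}
  one_mem' := by intro x y z; simp
  mul_mem' := by
    intro a b ha hb x y z
    simp only [Pi.mul_apply]
    rw [mul_mul_mul_comm, ha x y z, hb x y z, mul_mul_mul_comm]
  inv_mem' := by
    intro a ha x y z
    simp only [Pi.inv_apply]
    rw [← mul_inv, ← mul_inv, ha x y z]

/-- The subgroup of 2-coboundaries inside the group of 2-cocycles. -/
def coboundaries (G : Type*) [Group G] : Subgroup (CocycleGroup G) where
  carrier := {a | ∃ ζ : G → ℂˣ, ∀ x y, (a : G → G → ℂˣ) x y = ζ x * ζ y * (ζ (x * y))⁻¹}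
  one_mem' := ⟨1, by intro x y; simp⟩
  mul_mem' := by
    rintro a b ⟨ζ, hζ⟩ ⟨η, hη⟩
    refine ⟨ζ * η, fun x y => ?_⟩
    have : ((a * b : CocycleGroup G) : G → G → ℂˣ) x y
        = (a : G → G → ℂˣ) x y * (b : G → G → ℂˣ) x y := rfl
    rw [this, hζ, hη]
    simp only [Pi.mul_apply, mul_inv]
    ac_rfl
  inv_mem' := by
    rintro a ⟨ζ, hζ⟩
    refine ⟨ζ⁻¹, fun x y => ?_⟩
    have : ((a⁻¹ : CocycleGroup G) : G → G → ℂˣ) x y = ((a : G → G → ℂˣ) x y)⁻¹ := rfl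
    rw [this, hζ]
    simp only [Pi.inv_apply, mul_inv, inv_inv]
    try ac_rfl

/-- The Schur multiplier `H²(G, ℂˣ)` (trivial action): cocycles modulo coboundaries. -/
abbrev SchurMultiplier (G : Type*) [Group G] := CocycleGroup G ⧸ coboundaries G

/-- The coclass of a cocycle. -/
def mkClass (a : CocycleGroup G) : SchurMultiplier G := QuotientGroup.mk a

/-- Pullback of cocycles along a group homomorphism. -/
def cocyclePull {H : Type*} [Group H] (f : H →* G) : CocycleGroup G →* CocycleGroup H where
  toFun a := ⟨fun x y => (a : G → G → ℂˣ) (f x) (f y), by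
    intro x y z
    have h := a.2 (f x) (f y) (f z)
    simpa [map_mul] using h⟩
  map_one' := rfl
  map_mul' a b := rfl

/-- Pullback (restriction/inflation) on Schur multipliers along a group homomorphism. -/
def H2Pull {H : Type*} [Group H] (f : H →* G) : SchurMultiplier G →* SchurMultiplier H :=
  QuotientGroup.map _ _ (cocyclePull f) (by
    rintro a ⟨ζ, hζ⟩
    exact ⟨ζ ∘ f, fun x y => by
      simpa [cocyclePull, map_mul] using hζ (f x) (f y)⟩)

/-- Restriction of a coclass to a subgroup. -/
abbrev H2Res (H : Subgroup G) : SchurMultiplier G →* SchurMultiplier H := H2Pull H.subtype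

variable {M M' MV U : Type*} [AddCommGroup M] [Module ℂ M] [AddCommGroup M'] [Module ℂ M']
  [AddCommGroup MV] [Module ℂ MV] [AddCommGroup U] [Module ℂ U]

/-- A projective representation of `G` on the complex vector space `M`,
with an explicit 2-cocycle `α`. -/
structure ProjRep (G : Type*) [Group G] (M : Type*) [AddCommGroup M] [Module ℂ M] where
  α : CocycleGroup G
  φ : G → M ≃ₗ[ℂ] M
  rel : ∀ x y (v : M), φ x (φ y v) = ((α : G → G → ℂˣ) x y : ℂ) • φ (x * y) v

/-- The coclass in the Schur multiplier determined by a projective representation. -/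
def ProjRep.coclass (ρ : ProjRep G M) : SchurMultiplier G := QuotientGroup.mk ρ.α

/-- Irreducibility of a projective representation: the only invariant subspaces are trivial. -/
def ProjRep.Irreducible (ρ : ProjRep G M) : Prop :=
  Nontrivial M ∧ ∀ W : Submodule ℂ M, (∀ g : G, ∀ v ∈ W, ρ.φ g v ∈ W) → W = ⊥ ∨ W = ⊤

/-- Pullback of a projective representation along a group homomorphism
(e.g. restriction to a subgroup, or inflation from a quotient). -/
def ProjRep.pull {H : Type*} [Group H] (f : H →* G) (ρ : ProjRep G M) : ProjRep H M where
  α := cocyclePull f ρ.α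
  φ h := ρ.φ (f h)
  rel x y v := by simpa [map_mul, cocyclePull] using ρ.rel (f x) (f y) v

/-- Restriction of a projective representation to a subgroup. -/
def ProjRep.res (ρ : ProjRep G M) (H : Subgroup G) : ProjRep H M := ρ.pull H.subtype

/-- Tensor product of two projective representations; the cocycles multiply. -/
noncomputable def ProjRep.tprod (ρ : ProjRep G M) (σ : ProjRep G M') :
    ProjRep G (M ⊗[ℂ] M') where
  α := ρ.α * σ.α
  φ g := TensorProduct.congr (ρ.φ g) (σ.φ g)
  rel x y v := by
    have h : (TensorProduct.congr (ρ.φ x) (σ.φ x)).toLinearMap ∘ₗ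
          (TensorProduct.congr (ρ.φ y) (σ.φ y)).toLinearMap
        = (((ρ.α : G → G → ℂˣ) x y : ℂ) * ((σ.α : G → G → ℂˣ) x y : ℂ)) •
          (TensorProduct.congr (ρ.φ (x * y)) (σ.φ (x * y))).toLinearMap := by
      apply TensorProduct.ext'
      intro m n
      simp [TensorProduct.congr_tmul, ρ.rel, σ.rel, TensorProduct.smul_tmul',
        TensorProduct.tmul_smul, smul_smul, mul_comm]
    have h2 := LinearMap.congr_fun h v
    simp only [LinearMap.comp_apply, LinearMap.smul_apply, LinearEquiv.coe_coe] at h2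
    rw [h2]
    first | rfl | simp

open scoped TensorProduct in
/-- Tensor product of a finite family of projective representations. -/
noncomputable def ProjRep.tprodPi {ι : Type*} [Fintype ι] {N : ι → Type*}
    [∀ i, AddCommGroup (N i)] [∀ i, Module ℂ (N i)]
    (ρ : ∀ i, ProjRep G (N i)) : ProjRep G (⨂[ℂ] i, N i) where
  α := ∏ i, (ρ i).α
  φ g := PiTensorProduct.congr fun i => (ρ i).φ g
  rel x y v := by
    have h : (PiTensorProduct.congr fun i => (ρ i).φ x).toLinearMap ∘ₗ
          (PiTensorProduct.congr fun i => (ρ i).φ y).toLinearMap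
        = (∏ i, (((ρ i).α : G → G → ℂˣ) x y : ℂ)) •
          (PiTensorProduct.congr fun i => (ρ i).φ (x * y)).toLinearMap := by
      apply PiTensorProduct.ext
      apply MultilinearMap.ext
      intro m
      simp only [LinearMap.compMultilinearMap_apply, LinearMap.coe_comp,
        LinearEquiv.coe_coe, Function.comp_apply, PiTensorProduct.congr_tprod,
        LinearMap.smul_apply]
      rw [funext fun i => (ρ i).rel x y (m i)]
      rw [MultilinearMap.map_smul_univ]
    have h2 := LinearMap.congr_fun h v
    have hc1 : ((∏ i, (ρ i).α : CocycleGroup G) : G → G → ℂˣ)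
        = ∏ i, ((ρ i).α : G → G → ℂˣ) :=
      SubmonoidClass.coe_finset_prod _ _
    have hcoe : (((∏ i, (ρ i).α : CocycleGroup G) : G → G → ℂˣ) x y : ℂ)
        = ∏ i, (((ρ i).α : G → G → ℂˣ) x y : ℂ) := by
      rw [hc1]
      simp only [Finset.prod_apply]
      exact map_prod (Units.coeHom ℂ) _ _
    simpa [hcoe, smul_smul] using h2

/-- Similarity (projective equivalence) of projective representations: the cocycles differ by
a coboundary `δζ` and the actions are intertwined by a linear equivalence, twisted by `ζ`. -/
def ProjRep.IsSimilar (ρ : ProjRep G M) (σ : ProjRep G M') : Prop :=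
  ∃ (ζ : G → ℂˣ) (e : M ≃ₗ[ℂ] M'),
    (∀ x y : G, (σ.α : G → G → ℂˣ) x y
        = (ρ.α : G → G → ℂˣ) x y * ζ x * ζ y * (ζ (x * y))⁻¹) ∧
    ∀ (g : G) (v : M), σ.φ g (e v) = (ζ g : ℂ) • e (ρ.φ g v)

/-- `V` occurs as an (irreducible) constituent of `ρ`: there is an injective equivariant map
`V → ρ`, up to a coboundary twist of the cocycles. -/
def ProjRep.HasConstituent {K : Type*} [Group K] (ρ : ProjRep K M') (V : ProjRep K MV) : Prop :=
  ∃ (ζ : K → ℂˣ) (e : MV →ₗ[ℂ] M'), Function.Injective e ∧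
    (∀ x y : K, (ρ.α : K → K → ℂˣ) x y
        = (V.α : K → K → ℂˣ) x y * ζ x * ζ y * (ζ (x * y))⁻¹) ∧
    ∀ (x : K) (v : MV), ρ.φ x (e v) = (ζ x : ℂ) • e (V.φ x v)

/-- `ρ` is induced from the projective representation `σ` of the subgroup `J`:
up to a coboundary twist, `σ` embeds `J`-equivariantly into `ρ` and `M` is the (direct) sum of
the translates of its image along a transversal of `J` in `G`. -/
def ProjRep.IsInducedFrom (ρ : ProjRep G M) (J : Subgroup G) (σ : ProjRep J U) : Prop :=
  ∃ ζ : J → ℂˣ,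
    (∀ x y : J, (σ.α : ↥J → ↥J → ℂˣ) x y
        = (ρ.α : G → G → ℂˣ) x y * ζ x * ζ y * (ζ (x * y))⁻¹) ∧
    ∃ e : U →ₗ[ℂ] M, Function.Injective e ∧
      (∀ (j : J) (u : U), ρ.φ j (e u) = ((ζ j : ℂ))⁻¹ • e (σ.φ j u)) ∧
      ∃ T : Finset G, (∀ g : G, ∃! t, t ∈ T ∧ t⁻¹ * g ∈ J) ∧
        (⨆ t ∈ T, (LinearMap.range e).map (ρ.φ t).toLinearMap) = ⊤ ∧
        Module.finrank ℂ M = T.card * Module.finrank ℂ U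

/-- A projective representation of `K` factors through the quotient `K/N` (i.e. it is inflated
from `K/N`) if both the cocycle and the action are constant on cosets of `N`. -/
def ProjRep.FactorsThrough {K : Type*} [Group K] (ρ : ProjRep K M) (N : Subgroup K) : Prop :=
  (∀ x x' y y' : K, x⁻¹ * x' ∈ N → y⁻¹ * y' ∈ N →
      (ρ.α : K → K → ℂˣ) x y = (ρ.α : K → K → ℂˣ) x' y') ∧
  (∀ x x' : K, x⁻¹ * x' ∈ N → ρ.φ x = ρ.φ x')

/-- A coclass of `K` is inflated from `K/N` if it is represented by a cocycle constant on
cosets of `N`. -/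
def InflatedClass {K : Type*} [Group K] (N : Subgroup K) (b : SchurMultiplier K) : Prop :=
  ∃ a : CocycleGroup K, mkClass a = b ∧
    ∀ x x' y y' : K, x⁻¹ * x' ∈ N → y⁻¹ * y' ∈ N →
      (a : K → K → ℂˣ) x y = (a : K → K → ℂˣ) x' y'

/-- The inertia set `I_G^c(V)` of a projective representation `φ` of a (normal) subgroup `N`,
with respect to a global cocycle `a` of `G` restricting to the cocycle of `φ`. -/
def inertiaSet (a : CocycleGroup G) (N : Subgroup G) (φ : N → M ≃ₗ[ℂ] M) : Set G :=
  {g | ∃ y : M ≃ₗ[ℂ] M, ∀ (x : G) (hx : x ∈ N) (hxg : g⁻¹ * x * g ∈ N) (v : M),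
      y.symm ((φ ⟨x, hx⟩) (y v)) =
        (((a : G → G → ℂˣ) x g : ℂ) * (((a : G → G → ℂˣ) g (g⁻¹ * x * g) : ℂ))⁻¹) •
          φ ⟨g⁻¹ * x * g, hxg⟩ v}

/-- The `c`-class sum of `x` in the twisted group algebra `ℂ^c K`
(coordinates with respect to the standard basis). -/
noncomputable def classSum {K : Type*} [Group K] (a : CocycleGroup K) (x : K) : K → ℂ :=
  fun z => ((Nat.card (Subgroup.centralizer {x} : Subgroup K) : ℂ))⁻¹ *
    ∑ᶠ g : K, if z = g⁻¹ * x * g then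
      ((a : K → K → ℂˣ) x g : ℂ) * (((a : K → K → ℂˣ) g (g⁻¹ * x * g) : ℂ))⁻¹ else 0

/-- An element is `c`-regular if its class sum in the twisted group algebra is nonzero. -/
def IsCRegular {K : Type*} [Group K] (a : CocycleGroup K) (x : K) : Prop :=
  classSum a x ≠ 0

/-- Multiplication in the twisted group algebra `ℂ^a K`, in coordinates. -/
noncomputable def twistedMul {K : Type*} [Group K] (a : CocycleGroup K) (f g : K → ℂ) : K → ℂ :=
  fun z => ∑ᶠ x : K, ((a : K → K → ℂˣ) x (x⁻¹ * z) : ℂ) * f x * g (x⁻¹ * z)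

/-- The center of the twisted group algebra `ℂ^a K`, in coordinates. -/
def twistedCenter {K : Type*} [Group K] (a : CocycleGroup K) : Set (K → ℂ) :=
  {f | ∀ g : K → ℂ, twistedMul a f g = twistedMul a g f}

/-- Conjugation by `g ∈ G` on the twisted group algebra `ℂ^a N` of a normal subgroup `N`,
in coordinates: `(xσ)^(gσ) = a x g * (a g (g⁻¹xg))⁻¹ • (g⁻¹xg)σ`. -/
noncomputable def conjTwisted (a : CocycleGroup G) (N : Subgroup G) (hN : N.Normal) (g : G)
    (f : N → ℂ) : N → ℂ :=
  fun z => ((a : G → G → ℂˣ) (g * z * g⁻¹) g : ℂ) * (((a : G → G → ℂˣ) g (z : G) : ℂ))⁻¹ *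
    f ⟨g * z * g⁻¹, hN.conj_mem z.1 z.2 g⟩

/-- `n` is a `π`-number: all its prime divisors lie in `π`. -/
def IsPiNumber (π : Set ℕ) (n : ℕ) : Prop := ∀ p : ℕ, p.Prime → p ∣ n → p ∈ π

/-- `H` is a Hall `π`-subgroup of `G`: its order is a `π`-number and its index a `π'`-number. -/
def IsHall (π : Set ℕ) (H : Subgroup G) : Prop :=
  IsPiNumber π (Nat.card H) ∧ IsPiNumber πᶜ H.index

/-- `G` is `π`-separable: it has a normal series each of whose factors is
a `π`-group or a `π'`-group. -/
def IsPiSeparable (π : Set ℕ) (G : Type*) [Group G] : Prop :=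
  ∃ (l : ℕ) (s : Fin (l + 1) → Subgroup G), s 0 = ⊥ ∧ s (Fin.last l) = ⊤ ∧ Monotone s ∧
    (∀ i, (s i).Normal) ∧
    ∀ i : Fin l, IsPiNumber π ((s i.castSucc).relIndex (s i.succ)) ∨
      IsPiNumber πᶜ ((s i.castSucc).relIndex (s i.succ))

/-- `N = O_π(G)` is the largest normal subgroup of `G` whose order is a `π`-number. -/
def IsPiCore (π : Set ℕ) (N : Subgroup G) : Prop :=
  N.Normal ∧ IsPiNumber π (Nat.card N) ∧
    ∀ K : Subgroup G, K.Normal → IsPiNumber π (Nat.card K) → K ≤ N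

/-- `N₂/N₁ = O_π(G/N₁)`: `N₂` is the largest normal subgroup of `G` containing `N₁` such that
`N₂/N₁` is a `π`-group. -/
def IsPiCoreAbove (π : Set ℕ) (N₁ N₂ : Subgroup G) : Prop :=
  N₂.Normal ∧ N₁ ≤ N₂ ∧ IsPiNumber π (N₁.relIndex N₂) ∧
    ∀ K : Subgroup G, K.Normal → N₁ ≤ K → IsPiNumber π (N₁.relIndex K) → K ≤ N₂

/-- The `π`-part of a natural number. -/
noncomputable def piPart (π : Set ℕ) (n : ℕ) : ℕ :=
  n.factorization.prod fun p k => if p ∈ π then p ^ k else 1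

/-- The set of primes dividing the degree of some irreducible `c`-module of `G`. -/
def PiIrr (G : Type*) [Group G] (c : SchurMultiplier G) : Set ℕ :=
  {p | p.Prime ∧ ∃ (n : ℕ) (ρ : ProjRep G (Fin n → ℂ)), ρ.Irreducible ∧ ρ.coclass = c ∧ p ∣ n}


lemma IsPiNumber.of_dvd {π : Set ℕ} {m n : ℕ} (h : IsPiNumber π n) (hd : m ∣ n) :
    IsPiNumber π m := fun q hq hqd => h q hq (hqd.trans hd)

lemma IsPiNumber.mul {π : Set ℕ} {m n : ℕ} (hm : IsPiNumber π m) (hn : IsPiNumber π n) :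
    IsPiNumber π (m * n) := fun q hq hqd =>
  ((Nat.Prime.dvd_mul hq).mp hqd).elim (hm q hq) (hn q hq)

lemma IsPiNumber.coprime {π : Set ℕ} {m n : ℕ} (hm : IsPiNumber π m)
    (hn : IsPiNumber πᶜ n) : Nat.Coprime m n := by
  rw [Nat.coprime_iff_gcd_eq_one]
  by_contra h
  have h0 : Nat.gcd m n ≠ 0 := by
    intro h0
    rw [Nat.gcd_eq_zero_iff] at h0
    exact hn 2 Nat.prime_two (h0.2 ▸ dvd_zero 2) (hm 2 Nat.prime_two (h0.1 ▸ dvd_zero 2))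
  obtain ⟨q, hq, hqd⟩ := Nat.exists_prime_and_dvd (by omega : Nat.gcd m n ≠ 1)
  exact hn q hq (hqd.trans (Nat.gcd_dvd_right m n)) (hm q hq (hqd.trans (Nat.gcd_dvd_left m n)))

lemma IsPiNumber.pi_eq_one {π : Set ℕ} {n : ℕ} (hm : IsPiNumber π n) (hn : IsPiNumber πᶜ n)
    (h0 : n ≠ 0) : n = 1 := by
  by_contra h1
  obtain ⟨q, hq, hqd⟩ := Nat.exists_prime_and_dvd h1
  exact hn q hq hqd (hm q hq hqd)

lemma card_mul_relindex {Q : Type*} [Group Q] {Z K : Subgroup Q} (h : Z ≤ K) :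
    Nat.card Z * Z.relIndex K = Nat.card K := by
  have h1 := Subgroup.card_mul_index (Z.subgroupOf K)
  rwa [Nat.card_congr (Subgroup.subgroupOfEquivOfLe h).toEquiv] at h1

lemma centralizer_normal {Q : Type*} [Group Q] {F : Subgroup Q} (hF : F.Normal) :
    (Subgroup.centralizer (F : Set Q)).Normal := by
  constructor
  intro c hc g
  rw [Subgroup.mem_centralizer_iff] at hc ⊢
  intro h hh
  have h1 : g⁻¹ * h * g ∈ F := by simpa using hF.conj_mem h hh g⁻¹
  have h2 := hc _ h1
  calc h * (g * c * g⁻¹) = g * ((g⁻¹ * h * g) * c) * g⁻¹ := by group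
    _ = g * (c * (g⁻¹ * h * g)) * g⁻¹ := by rw [h2]
    _ = g * c * g⁻¹ * h := by group

lemma hall_higman {Q : Type*} [Group Q] [Finite Q] {p : ℕ}
    (hsol : IsPiSeparable {p} Q)
    (hOp' : ∀ K : Subgroup Q, K.Normal → IsPiNumber ({p} : Set ℕ)ᶜ (Nat.card K) → K = ⊥)
    {F : Subgroup Q} (hFn : F.Normal) (hFp : IsPiNumber {p} (Nat.card F))
    (hFmax : ∀ K : Subgroup Q, K.Normal → IsPiNumber {p} (Nat.card K) → K ≤ F) :
    Subgroup.centralizer (F : Set Q) ≤ F := by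
  by_contra hCF
  set C := Subgroup.centralizer (F : Set Q) with hCdef
  have hCn : C.Normal := centralizer_normal hFn
  haveI := hCn; haveI := hFn
  set Z := C ⊓ F with hZdef
  have hZn : Z.Normal := Subgroup.normal_inf_normal C F
  haveI := hZn
  have hZC : Z ≤ C := inf_le_left
  have hZF : Z ≤ F := inf_le_right
  have hZltC : Z < C := lt_of_le_of_ne hZC (by
    intro h
    exact hCF (h ▸ (inf_le_right : Z ≤ F)))
  -- minimal normal K with Z < K ≤ C
  set S : Set (Subgroup Q) := {K | K.Normal ∧ Z < K ∧ K ≤ C} with hSdef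
  have hCS : C ∈ S := ⟨hCn, hZltC, le_rfl⟩
  have hex : ∃ n, ∃ K ∈ S, Nat.card K = n := ⟨Nat.card C, C, hCS, rfl⟩
  obtain ⟨K, hKS, hKcard⟩ := Nat.find_spec hex
  obtain ⟨hKn, hZK, hKC⟩ := hKS
  haveI := hKn
  have hKdich : ∀ L : Subgroup Q, L.Normal → Z ≤ L → L ≤ K → L = Z ∨ L = K := by
    intro L hLn hZL hLK
    rcases eq_or_lt_of_le hZL with h | h
    · exact Or.inl h.symm
    · refine Or.inr (Subgroup.eq_of_le_of_card_ge hLK ?_)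
      have : Nat.find hex ≤ Nat.card L := Nat.find_min' hex ⟨L, ⟨hLn, h, hLK.trans hKC⟩, rfl⟩
      omega
  have hZcard : IsPiNumber {p} (Nat.card Z) := hFp.of_dvd (Subgroup.card_dvd_of_le hZF)
  -- the chief factor K/Z lies across one step of the series
  obtain ⟨l, s, hs0, hsl, hsmono, hsnorm, hsfac⟩ := hsol
  have hex2 : ∃ m, ∃ hm : m < l + 1, (K ⊓ s ⟨m, hm⟩) ⊔ Z = K := by
    refine ⟨l, Nat.lt_succ_self l, ?_⟩
    have h1 : s ⟨l, Nat.lt_succ_self l⟩ = ⊤ := hsl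
    rw [h1, inf_top_eq, sup_eq_left.mpr hZK.le]
  obtain ⟨hmlt, hmK⟩ := Nat.find_spec hex2
  set m := Nat.find hex2 with hmdef
  have hm0 : m ≠ 0 := by
    intro h
    have h1 : (⟨m, hmlt⟩ : Fin (l + 1)) = 0 := by ext; simp [h]
    rw [h1, hs0, inf_bot_eq, bot_sup_eq] at hmK
    exact hZK.ne hmK
  have hm1lt : m - 1 < l + 1 := by omega
  have hprevne : (K ⊓ s ⟨m - 1, hm1lt⟩) ⊔ Z ≠ K := by
    intro h
    exact Nat.find_min hex2 (by omega : m - 1 < m) ⟨hm1lt, h⟩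
  have hprev : K ⊓ s ⟨m - 1, hm1lt⟩ ≤ Z := by
    haveI := hsnorm ⟨m - 1, hm1lt⟩
    have hLn : ((K ⊓ s ⟨m - 1, hm1lt⟩) ⊔ Z).Normal := Subgroup.sup_normal _ _
    have hLK : (K ⊓ s ⟨m - 1, hm1lt⟩) ⊔ Z ≤ K := sup_le inf_le_left hZK.le
    rcases hKdich _ hLn le_sup_right hLK with h | h
    · exact le_sup_left.trans h.le
    · exact absurd h hprevne
  -- set up the indices
  have hil : m - 1 < l := by omega
  set i : Fin l := ⟨m - 1, hil⟩ with hidef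
  have hics : i.castSucc = ⟨m - 1, hm1lt⟩ := rfl
  have hisucc : i.succ = ⟨m, hmlt⟩ := by
    ext
    simp only [Fin.val_succ]
    simp only [hidef, Fin.val_mk]
    omega
  set si := s i.castSucc with hsidef
  set ssi := s i.succ with hssidef
  have hBZ : K ⊓ si ≤ Z := by rw [hsidef, hics]; exact hprev
  have hAK : (K ⊓ ssi) ⊔ Z = K := by rw [hssidef, hisucc]; exact hmK
  haveI := hsnorm i.castSucc
  set A := K ⊓ ssi with hAdef
  have hdvd : Z.relIndex K ∣ si.relIndex ssi := by
    have h1 : Z.relIndex K = Z.relIndex A := by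
      rw [← hAK, Subgroup.relIndex_sup_right]
    have hinfeq : (K ⊓ si).relIndex A = si.relIndex A := by
      rw [← Subgroup.inf_relIndex_right (K ⊓ si) A, ← Subgroup.inf_relIndex_right si A]
      congr 1
      ext x
      simp only [Subgroup.mem_inf, hAdef]
      tauto
    have h2 : Z.relIndex A ∣ si.relIndex A := by
      have h3 := Subgroup.relIndex_dvd_of_le_left A hBZ
      rwa [hinfeq] at h3
    have h4 : si.relIndex A ∣ si.relIndex ssi := by
      have h5 : si.relIndex A = si.relIndex (A ⊔ si) := (Subgroup.relIndex_sup_right A si).symm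
      have h6 : A ⊔ si ≤ ssi := sup_le inf_le_right (hsmono (Fin.castSucc_lt_succ (i := i)).le)
      rw [h5]
      exact ⟨(A ⊔ si).relIndex ssi,
        (Subgroup.relIndex_mul_relIndex si (A ⊔ si) ssi le_sup_right h6).symm⟩
    rw [h1]
    exact h2.trans h4
  have hrelne0 : Z.relIndex K ≠ 0 := by
    intro h
    have := card_mul_relindex hZK.le
    rw [h, mul_zero] at this
    exact (Nat.card_pos (α := K)).ne' this.symm
  have hrelne1 : Z.relIndex K ≠ 1 := by
    intro h
    exact hZK.not_ge (Subgroup.relIndex_eq_one.mp h)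
  rcases hsfac i with hcase | hcase
  · -- K/Z is a p-group, so K is a normal p-subgroup, hence K ≤ F, contradiction
    have hKpi : IsPiNumber {p} (Nat.card K) := by
      rw [← card_mul_relindex hZK.le]
      exact hZcard.mul (hcase.of_dvd hdvd)
    have hKF : K ≤ F := hFmax K hKn hKpi
    exact hZK.not_ge (le_inf hKC hKF)
  · -- K/Z is a p'-group: Schur-Zassenhaus gives a nontrivial normal p'-subgroup
    have hcase' : IsPiNumber ({p} : Set ℕ)ᶜ (Z.relIndex K) := hcase.of_dvd hdvd
    have hcardeq : Nat.card (Z.subgroupOf K) = Nat.card Z :=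
      Nat.card_congr (Subgroup.subgroupOfEquivOfLe hZK.le).toEquiv
    haveI : (Z.subgroupOf K).Normal := hZn.subgroupOf K
    have hcop : Nat.Coprime (Nat.card (Z.subgroupOf K)) (Z.subgroupOf K).index := by
      rw [hcardeq]
      exact hZcard.coprime hcase'
    obtain ⟨H', hco⟩ := Subgroup.exists_right_complement'_of_coprime hcop
    have hH'card : Nat.card H' = Z.relIndex K := by
      have h1 := hco.card_mul
      rw [hcardeq] at h1
      have h2 := card_mul_relindex hZK.le
      have h3 : (0 : ℕ) < Nat.card Z := Nat.card_pos
      exact Nat.eq_of_mul_eq_mul_left h3 (by rw [h1, h2])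
    -- Z is central in K
    have hZcent : ∀ z ∈ Z, ∀ k ∈ K, z * k = k * z := by
      intro z hz k hk
      exact Subgroup.mem_centralizer_iff.mp (hKC hk) z (hZF hz)
    -- H' is normal in K
    haveI hH'n : H'.Normal := by
      constructor
      intro h hh k
      obtain ⟨⟨n, h₀⟩, hnh, -⟩ := hco.existsUnique k
      have hcentK : ∀ x : ↥K, (n : ↥K) * x = x * (n : ↥K) := by
        intro x
        exact Subtype.ext (hZcent _ ((Subgroup.mem_subgroupOf).mp n.2) _ x.2)
      have hk : k = (n : ↥K) * (h₀ : ↥K) := hnh.symm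
      have key : k * h * k⁻¹ = (h₀ : ↥K) * h * (h₀ : ↥K)⁻¹ := by
        rw [hk]
        have h1 : (n : ↥K) * ((h₀ : ↥K) * h * (h₀ : ↥K)⁻¹) =
            ((h₀ : ↥K) * h * (h₀ : ↥K)⁻¹) * (n : ↥K) := hcentK _
        calc (n : ↥K) * (h₀ : ↥K) * h * ((n : ↥K) * (h₀ : ↥K))⁻¹
            = (n : ↥K) * ((h₀ : ↥K) * h * (h₀ : ↥K)⁻¹) * (n : ↥K)⁻¹ := by group
          _ = ((h₀ : ↥K) * h * (h₀ : ↥K)⁻¹) * (n : ↥K) * (n : ↥K)⁻¹ := by rw [h1]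
          _ = (h₀ : ↥K) * h * (h₀ : ↥K)⁻¹ := by group
      rw [key]
      exact Subgroup.mul_mem _ (Subgroup.mul_mem _ h₀.2 hh) (Subgroup.inv_mem _ h₀.2)
    -- p'-elements of K lie in H'
    have hmemH' : ∀ x : ↥K, IsPiNumber ({p} : Set ℕ)ᶜ (orderOf x) → x ∈ H' := by
      intro x hx
      have h1 : orderOf ((x : ↥K ⧸ H')) ∣ orderOf x := orderOf_map_dvd (QuotientGroup.mk' H') x
      have h2 : orderOf ((x : ↥K ⧸ H')) ∣ Nat.card (↥K ⧸ H') := orderOf_dvd_natCard _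
      have h3 : Nat.card (↥K ⧸ H') = Nat.card Z := by
        have : Nat.card (↥K ⧸ H') = H'.index := rfl
        rw [this, hco.index_eq_card, hcardeq]
      have h4 : orderOf ((x : ↥K ⧸ H')) = 1 := by
        refine IsPiNumber.pi_eq_one (π := {p}) ?_ ?_ ?_
        · exact hZcard.of_dvd (h3 ▸ h2)
        · exact hx.of_dvd h1
        · exact (orderOf_pos _).ne'
      rw [orderOf_eq_one_iff] at h4
      exact (QuotientGroup.eq_one_iff x).mp h4
    -- the image of H' in Q is a nontrivial normal p'-subgroup
    set Hq := H'.map K.subtype with hHqdef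
    have hHqcard : Nat.card Hq = Z.relIndex K := by
      rw [← hH'card]
      exact (Nat.card_congr (Subgroup.equivMapOfInjective H' K.subtype
        K.subtype_injective).toEquiv).symm
    have hHqn : Hq.Normal := by
      constructor
      intro x hx q
      obtain ⟨y, hy, rfl⟩ := hx
      have hxK : q * (K.subtype y) * q⁻¹ ∈ K := hKn.conj_mem _ y.2 q
      refine ⟨⟨q * (K.subtype y) * q⁻¹, hxK⟩, ?_, rfl⟩
      apply hmemH'
      have h1 : orderOf ((⟨q * (K.subtype y) * q⁻¹, hxK⟩ : ↥K)) = orderOf y := by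
        rw [Subgroup.orderOf_mk]
        have h2 : SemiconjBy q (K.subtype y : Q) (q * (K.subtype y) * q⁻¹) := by
          unfold SemiconjBy; group
        rw [← h2.orderOf_eq q]
        exact Subgroup.orderOf_coe y
      rw [h1]
      have h5 : orderOf y = orderOf (⟨y, hy⟩ : H') := by
        rw [← Subgroup.orderOf_coe (⟨y, hy⟩ : H')]
      rw [h5]
      have h6 : orderOf (⟨y, hy⟩ : H') ∣ Nat.card H' := orderOf_dvd_natCard _
      exact (hH'card ▸ hcase').of_dvd h6
    have hHqbot : Hq = ⊥ := hOp' Hq hHqn (hHqcard ▸ hcase')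
    rw [hHqbot, Subgroup.card_bot] at hHqcard
    exact hrelne1 hHqcard.symm

lemma IsPiNumber.exists_pow {p n : ℕ} (h : IsPiNumber {p} n) (h0 : n ≠ 0) : ∃ k, n = p ^ k :=
  ⟨_, Nat.eq_prime_pow_of_unique_prime_dvd h0
    (fun hd hdvd => Set.mem_singleton_iff.mp (h _ hd hdvd))⟩

/-- **Hall–Higman for abelian Sylow subgroups.** Let `G` be a finite `p`-solvable group with
abelian Sylow `p`-subgroups. Then `G = O_{p'pp'}(G)`: for `N₁ = O_{p'}(G)` and `N₂ = O_{p'p}(G)`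
(characterized as the largest normal subgroups with the corresponding properties), the quotient
`G/N₂` is a `p'`-group, i.e. the `p'`-series of `G` reaches `G` in three steps. -/
theorem statement_19 {G : Type} [Group G] [Fintype G] (p : ℕ) (hp : p.Prime)
    (hsol : IsPiSeparable {p} G)
    (hab : ∀ P : Sylow p G, ∀ x y : ↥(P : Subgroup G), x * y = y * x) :
    ∀ N₁ N₂ : Subgroup G, IsPiCore ({p} : Set ℕ)ᶜ N₁ →
      IsPiCoreAbove {p} N₁ N₂ → IsPiNumber ({p} : Set ℕ)ᶜ N₂.index := by
  intro N₁ N₂ hc1 hc2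
  obtain ⟨hN1n, hN1card, hN1max⟩ := hc1
  obtain ⟨hN2n, hle, hrel, hmax⟩ := hc2
  haveI := hN1n
  haveI : Fact p.Prime := ⟨hp⟩
  set f := QuotientGroup.mk' N₁ with hfdef
  have hker : f.ker = N₁ := QuotientGroup.ker_mk' N₁
  have hfsurj : Function.Surjective f := QuotientGroup.mk'_surjective N₁
  have hkerle : ∀ K : Subgroup (G ⧸ N₁), N₁ ≤ K.comap f := by
    intro K x hx
    have h1 : f x = 1 := by rw [← MonoidHom.mem_ker, hker]; exact hx
    rw [Subgroup.mem_comap, h1]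
    exact K.one_mem
  have hcardmap : ∀ K' : Subgroup G, Nat.card (K'.map f) = N₁.relIndex K' := by
    intro K'
    rw [← Subgroup.relIndex_bot_left, ← Subgroup.relIndex_comap (⊥ : Subgroup (G ⧸ N₁)) f K', MonoidHom.comap_bot, hker]
  -- O_{p'} of the quotient is trivial
  have hOp' : ∀ K : Subgroup (G ⧸ N₁), K.Normal →
      IsPiNumber ({p} : Set ℕ)ᶜ (Nat.card K) → K = ⊥ := by
    intro K hKn hKcard
    have h3 : N₁.relIndex (K.comap f) = Nat.card K := by
      rw [← hcardmap, Subgroup.map_comap_eq_self_of_surjective hfsurj K]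
    have hcard : Nat.card (K.comap f) = Nat.card N₁ * Nat.card K := by
      rw [← card_mul_relindex (hkerle K), h3]
    have h4 : K.comap f ≤ N₁ := hN1max _ (hKn.comap f) (by rw [hcard]; exact hN1card.mul hKcard)
    have h5 : K.comap f = N₁ := le_antisymm h4 (hkerle K)
    rw [← Subgroup.map_comap_eq_self_of_surjective hfsurj K, h5,
      Subgroup.map_eq_bot_iff, hker]
  -- the quotient is p-separable
  have hsolQ : IsPiSeparable {p} (G ⧸ N₁) := by
    obtain ⟨l, s, hs0, hsl, hmono, hnorm, hfac⟩ := hsol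
    refine ⟨l, fun i => (s i).map f, by show (s 0).map f = ⊥; rw [hs0, Subgroup.map_bot], ?_, ?_, ?_, ?_⟩
    · show (s (Fin.last l)).map f = ⊤
      rw [hsl, Subgroup.map_top_of_surjective f hfsurj]
    · exact fun a b hab' => Subgroup.map_mono (hmono hab')
    · exact fun i => (hnorm i).map f hfsurj
    · intro i
      have hd : ((s i.castSucc).map f).relIndex ((s i.succ).map f) ∣
          (s i.castSucc).relIndex (s i.succ) := by
        rw [← Subgroup.relIndex_comap ((s i.castSucc).map f) f (s i.succ), Subgroup.comap_map_eq]
        exact Subgroup.relIndex_dvd_of_le_left _ le_sup_left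
      rcases hfac i with h | h
      · exact Or.inl (h.of_dvd hd)
      · exact Or.inr (h.of_dvd hd)
  -- F = N₂/N₁ is the maximal normal p-subgroup of the quotient
  set F := N₂.map f with hFdef
  have hFn : F.Normal := hN2n.map f hfsurj
  have hFcard : IsPiNumber {p} (Nat.card F) := by rw [hcardmap]; exact hrel
  have hFmax : ∀ K : Subgroup (G ⧸ N₁), K.Normal → IsPiNumber {p} (Nat.card K) → K ≤ F := by
    intro K hKn hKp
    have h3 : N₁.relIndex (K.comap f) = Nat.card K := by
      rw [← hcardmap, Subgroup.map_comap_eq_self_of_surjective hfsurj K]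
    have h4 : K.comap f ≤ N₂ := hmax _ (hKn.comap f) (hkerle K) (h3 ▸ hKp)
    calc K = (K.comap f).map f := (Subgroup.map_comap_eq_self_of_surjective hfsurj K).symm
      _ ≤ F := Subgroup.map_mono h4
  -- the image of a Sylow subgroup
  obtain ⟨P⟩ : Nonempty (Sylow p G) := inferInstance
  set Pq := (P : Subgroup G).map f with hPqdef
  have hPqp : IsPGroup p Pq := P.2.map f
  have hPqindex : ¬ p ∣ Pq.index := by
    intro h
    exact P.not_dvd_index (h.trans ((P : Subgroup G).index_map_dvd hfsurj))
  -- F is contained in Pq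
  haveI := hFn
  have hFP : F ≤ Pq := by
    have hFpgrp : IsPGroup p F := by
      obtain ⟨k, hk⟩ := hFcard.exists_pow Nat.card_pos.ne'
      exact IsPGroup.of_card hk
    have hsup : IsPGroup p (Pq ⊔ F : Subgroup (G ⧸ N₁)) := hPqp.to_sup_of_normal_right hFpgrp
    have h1 : Pq.relIndex (Pq ⊔ F) ∣ Pq.index :=
      ⟨(Pq ⊔ F).index, (Subgroup.relIndex_mul_index le_sup_left).symm⟩
    obtain ⟨n, hn⟩ := hsup.exists_card_eq
    have h2 : Pq.relIndex (Pq ⊔ F) ∣ p ^ n := by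
      rw [← hn]
      exact Subgroup.index_dvd_card (Pq.subgroupOf (Pq ⊔ F))
    have h4 : Pq.relIndex (Pq ⊔ F) = 1 := by
      obtain ⟨k, hk, hke⟩ := (Nat.dvd_prime_pow hp).mp h2
      rcases Nat.eq_zero_or_pos k with rfl | hkpos
      · simpa using hke
      · exfalso
        exact hPqindex ((dvd_pow_self p hkpos.ne').trans (hke ▸ h1))
    exact le_sup_right.trans (Subgroup.relIndex_eq_one.mp h4)
  -- Pq is abelian, so it centralizes F
  have hPc : Pq ≤ Subgroup.centralizer (F : Set (G ⧸ N₁)) := by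
    intro x hx
    rw [Subgroup.mem_centralizer_iff]
    intro h hh
    obtain ⟨a, ha, rfl⟩ := hx
    obtain ⟨b, hb, rfl⟩ := hFP hh
    rw [← map_mul, ← map_mul]
    congr 1
    exact congrArg Subtype.val (hab P ⟨b, hb⟩ ⟨a, ha⟩)
  -- Hall-Higman: Pq ≤ F, so the index of F is prime to p
  have hPF : Pq ≤ F := hPc.trans (hall_higman hsolQ hOp' hFn hFcard hFmax)
  have hFindex : ¬ p ∣ F.index := fun h => hPqindex (h.trans (Subgroup.index_dvd_of_le hPF))
  have hN2F : N₂.index = F.index := (N₂.index_map_eq hfsurj (hker.le.trans hle)).symm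
  intro q hq hqd
  simp only [Set.mem_compl_iff, Set.mem_singleton_iff]
  intro hqp
  subst hqp
  rw [hN2F] at hqd
  exact hFindex hqd


end ProjIM
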